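/- Let n ≥ 1 be an integer and define h_n(ρ) = ρ(1−ρ^n)/(1−ρ^{n+1}) for ρ ∈ [0,1) ∪ (1,∞). Then h_n is strictly increasing and strictly concave on [0,1), and strictly increasing and strictly concave on (1,∞); moreover its derivative satisfies h_n'(ρ) = (nρ^{n+1} − (n+1)ρ^n + 1)/(1−ρ^{n+1})² > 0 for all ρ ∈ [0,1) ∪ (1,∞). -/

import Mathlib

/-- The joining probability `h_n(ρ) = ρ(1−ρⁿ)/(1−ρⁿ⁺¹)`. -/
noncomputable def joinProb (n : ℕ) (ρ : ℝ) : ℝ := ρ * (1 - ρ ^ n) / (1 - ρ ^ (n + 1))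

noncomputable def Paux (m : ℕ) (x : ℝ) : ℝ := ∑ k ∈ Finset.range (m+1), ((k:ℝ)+1) * x^k
noncomputable def Qaux (m : ℕ) (x : ℝ) : ℝ := ∑ k ∈ Finset.range (m+2), x^k
noncomputable def Taux (m : ℕ) (x : ℝ) : ℝ :=
  ∑ j ∈ Finset.range (m+1), ((j:ℝ)+1) * ((m:ℝ)+1-(j:ℝ)) * x^j

lemma lemA (m : ℕ) (x : ℝ) :
    (x-1)^2 * Paux m x = ((m:ℝ)+1)*x^(m+2) - ((m:ℝ)+2)*x^(m+1) + 1 := by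
  induction m with
  | zero => simp [Paux]; ring
  | succ m ih =>
    rw [Paux, Finset.sum_range_succ, ← Paux]
    push_cast
    linear_combination ih

lemma lemC (m : ℕ) (x : ℝ) :
    (x-1) * Paux m x + Qaux m x = ((m:ℝ)+2)*x^(m+1) := by
  induction m with
  | zero => simp [Paux, Qaux, Finset.sum_range_succ]; ring
  | succ m ih =>
    rw [Paux, Finset.sum_range_succ, ← Paux, Qaux, Finset.sum_range_succ, ← Qaux]
    push_cast
    linear_combination ih

lemma lemT (m : ℕ) (x : ℝ) :
    (x-1) * Taux m x = 2*x*Paux m x - ((m:ℝ)+1)*Qaux m x := by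
  induction m with
  | zero => simp [Paux, Qaux, Taux, Finset.sum_range_succ]; ring
  | succ m ih =>
    have hsplit : Taux (m+1) x = Taux m x + Paux m x + ((m:ℝ)+2)*x^(m+1) := by
      simp only [Taux, Paux]
      rw [Finset.sum_range_succ, ← Finset.sum_add_distrib]
      push_cast
      congr 1
      · exact Finset.sum_congr rfl fun j hj => by push_cast; ring
      · ring
    have hP : Paux (m+1) x = Paux m x + ((m:ℝ)+2)*x^(m+1) := by
      simp only [Paux]; rw [Finset.sum_range_succ]; push_cast; ring
    have hQ : Qaux (m+1) x = Qaux m x + x^(m+2) := by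
      simp only [Qaux]; rw [Finset.sum_range_succ]
    rw [hsplit, hP, hQ]
    push_cast
    linear_combination ih + lemC m x

lemma Paux_pos (m : ℕ) {x : ℝ} (hx : 0 ≤ x) : 0 < Paux m x := by
  have h1 : (1:ℝ) ≤ Paux m x := by
    simpa [Paux] using Finset.single_le_sum (f := fun k : ℕ => ((k:ℝ)+1) * x^k)
      (fun i _ => by positivity) (Finset.mem_range.mpr (Nat.succ_pos m))
  linarith

lemma Taux_pos (m : ℕ) {x : ℝ} (hx : 0 ≤ x) : 0 < Taux m x := by
  have h1 : ((m:ℝ)+1) ≤ Taux m x := by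
    have := Finset.single_le_sum (f := fun j : ℕ => ((j:ℝ)+1) * ((m:ℝ)+1-(j:ℝ)) * x^j)
      (fun i hi => by
        have : (i:ℝ) ≤ (m:ℝ) := by
          exact_mod_cast Nat.lt_succ_iff.mp (Finset.mem_range.mp hi)
        have h2 : (0:ℝ) ≤ (m:ℝ)+1-(i:ℝ) := by linarith
        positivity)
      (Finset.mem_range.mpr (Nat.succ_pos m))
    simpa [Taux] using this
  have : (0:ℝ) < (m:ℝ)+1 := by positivity
  linarith

lemma core (m : ℕ) (x : ℝ) :
    (((m:ℝ)+1)*((m:ℝ)+2)*x^(m+1) - ((m:ℝ)+1)*((m:ℝ)+2)*x^m) * (1 - x^(m+2))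
      + 2*((m:ℝ)+2)*x^(m+1) * (((m:ℝ)+1)*x^(m+2) - ((m:ℝ)+2)*x^(m+1) + 1)
      = ((m:ℝ)+2)*(x-1)^3*x^m * Taux m x := by
  have hG : Qaux m x * (x-1) = x^(m+2) - 1 := by
    simpa [Qaux] using geom_sum_mul x (m+2)
  linear_combination (-(((m:ℝ)+2))*(x-1)^2*x^m) * lemT m x
    - (2*((m:ℝ)+2)*x^(m+1)) * lemA m x
    + (((m:ℝ)+1)*((m:ℝ)+2)*x^m*(x-1)) * hG

lemma hasDerivAt_joinProb (m : ℕ) {x : ℝ} (hv : (1:ℝ) - x^(m+2) ≠ 0) :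
    HasDerivAt (joinProb (m+1))
      ((((m:ℝ)+1)*x^(m+2) - ((m:ℝ)+2)*x^(m+1) + 1) / (1 - x^(m+2))^2) x := by
  have hu : HasDerivAt (fun y : ℝ => y * (1 - y^(m+1)))
      (1 * (1 - x^(m+1)) + x * (0 - ((m+1:ℕ):ℝ) * x^(m+1-1))) x :=
    (hasDerivAt_id x).mul ((hasDerivAt_const x 1).sub (hasDerivAt_pow (m+1) x))
  have hw : HasDerivAt (fun y : ℝ => 1 - y^(m+2)) (0 - ((m+2:ℕ):ℝ) * x^(m+2-1)) x :=
    (hasDerivAt_const x 1).sub (hasDerivAt_pow (m+2) x)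
  have h := hu.div hw hv
  refine h.congr_deriv (Eq.symm ?_)
  simp only [Nat.add_sub_cancel]
  push_cast
  field_simp
  ring

lemma hasDerivAt_F1 (m : ℕ) {x : ℝ} (hv : (1:ℝ) - x^(m+2) ≠ 0) :
    HasDerivAt (fun y : ℝ => (((m:ℝ)+1)*y^(m+2) - ((m:ℝ)+2)*y^(m+1) + 1) / (1 - y^(m+2))^2)
      (((m:ℝ)+2)*(x-1)^3*x^m * Taux m x / (1 - x^(m+2))^3) x := by
  have hg : HasDerivAt (fun y : ℝ => ((m:ℝ)+1)*y^(m+2) - ((m:ℝ)+2)*y^(m+1) + 1)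
      (((m:ℝ)+1)*(((m+2:ℕ):ℝ)*x^(m+2-1)) - ((m:ℝ)+2)*(((m+1:ℕ):ℝ)*x^(m+1-1)) + 0) x :=
    ((((hasDerivAt_pow (m+2) x).const_mul ((m:ℝ)+1)).sub
      ((hasDerivAt_pow (m+1) x).const_mul ((m:ℝ)+2))).add (hasDerivAt_const x 1))
  have hw : HasDerivAt (fun y : ℝ => (1 - y^(m+2))^2)
      ((2:ℕ) * (1 - x^(m+2))^(2-1) * (0 - ((m+2:ℕ):ℝ)*x^(m+2-1))) x :=
    ((hasDerivAt_const x 1).sub (hasDerivAt_pow (m+2) x)).pow 2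
  have h := hg.div hw (pow_ne_zero 2 hv)
  refine h.congr_deriv (Eq.symm ?_)
  simp only [Nat.add_sub_cancel]
  rw [div_eq_div_iff (pow_ne_zero 3 hv) (pow_ne_zero 2 (pow_ne_zero 2 hv))]
  push_cast
  linear_combination (-(1 - x^(m+2))^4) * core m x

/-- `h_n` is strictly increasing and strictly concave on `[0,1)` and on `(1,∞)`, and its
derivative equals `(nρⁿ⁺¹ − (n+1)ρⁿ + 1)/(1−ρⁿ⁺¹)²`, which is positive there. -/
theorem stmt16 (n : ℕ) (hn : 1 ≤ n) :
    StrictMonoOn (joinProb n) (Set.Ico (0 : ℝ) 1) ∧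
    StrictConcaveOn ℝ (Set.Ico (0 : ℝ) 1) (joinProb n) ∧
    StrictMonoOn (joinProb n) (Set.Ioi (1 : ℝ)) ∧
    StrictConcaveOn ℝ (Set.Ioi (1 : ℝ)) (joinProb n) ∧
    ∀ ρ : ℝ, ρ ∈ Set.Ico (0 : ℝ) 1 ∪ Set.Ioi (1 : ℝ) →
      deriv (joinProb n) ρ =
        ((n : ℝ) * ρ ^ (n + 1) - ((n : ℝ) + 1) * ρ ^ n + 1) / (1 - ρ ^ (n + 1)) ^ 2 ∧
      0 < ((n : ℝ) * ρ ^ (n + 1) - ((n : ℝ) + 1) * ρ ^ n + 1) / (1 - ρ ^ (n + 1)) ^ 2 := by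
  obtain ⟨m, rfl⟩ : ∃ m, n = m + 1 := ⟨n - 1, by omega⟩
  have hIco : ∀ x ∈ Set.Ico (0:ℝ) 1, 0 < 1 - x^(m+2) := by
    intro x hx
    have := pow_lt_one₀ hx.1 hx.2 (n := m+2) (by omega)
    linarith
  have hIoi : ∀ x ∈ Set.Ioi (1:ℝ), 1 - x^(m+2) < 0 := by
    intro x hx
    have := one_lt_pow₀ (Set.mem_Ioi.mp hx) (n := m+2) (by omega)
    linarith
  have hderiv : ∀ x : ℝ, (1:ℝ) - x^(m+2) ≠ 0 → deriv (joinProb (m+1)) x =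
      (((m:ℝ)+1)*x^(m+2) - ((m:ℝ)+2)*x^(m+1) + 1) / (1 - x^(m+2))^2 :=
    fun x hx => (hasDerivAt_joinProb m hx).deriv
  have hnum : ∀ x : ℝ, 0 ≤ x → x ≠ 1 →
      0 < ((m:ℝ)+1)*x^(m+2) - ((m:ℝ)+2)*x^(m+1) + 1 := by
    intro x hx hx1
    rw [← lemA m x]
    exact mul_pos (pow_two_pos_of_ne_zero (sub_ne_zero.mpr hx1)) (Paux_pos m hx)
  have hF1pos : ∀ x : ℝ, 0 ≤ x → x ≠ 1 → (1:ℝ) - x^(m+2) ≠ 0 →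
      0 < (((m:ℝ)+1)*x^(m+2) - ((m:ℝ)+2)*x^(m+1) + 1) / (1 - x^(m+2))^2 :=
    fun x hx hx1 hv => div_pos (hnum x hx hx1) (pow_two_pos_of_ne_zero hv)
  have hcont : ∀ s : Set ℝ, (∀ x ∈ s, (1:ℝ) - x^(m+2) ≠ 0) →
      ContinuousOn (joinProb (m+1)) s := by
    intro s hs
    unfold joinProb
    exact ContinuousOn.div (by fun_prop) (by fun_prop) hs
  have hderiv2 : ∀ x : ℝ, (1:ℝ) - x^(m+2) ≠ 0 →
      deriv (deriv (joinProb (m+1))) x =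
        ((m:ℝ)+2)*(x-1)^3*x^m * Taux m x / (1 - x^(m+2))^3 := by
    intro x hx
    have hcv : Continuous fun y : ℝ => 1 - y^(m+2) := by fun_prop
    have hU : IsOpen {y : ℝ | (1:ℝ) - y^(m+2) ≠ 0} := isOpen_compl_singleton.preimage hcv
    have hev : deriv (joinProb (m+1)) =ᶠ[nhds x]
        fun y => (((m:ℝ)+1)*y^(m+2) - ((m:ℝ)+2)*y^(m+1) + 1) / (1 - y^(m+2))^2 := by
      filter_upwards [hU.mem_nhds hx] with y hy using (hasDerivAt_joinProb m hy).deriv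
    rw [hev.deriv_eq, (hasDerivAt_F1 m hx).deriv]
  have hodd3 : Odd 3 := ⟨1, by norm_num⟩
  have mono1 : StrictMonoOn (joinProb (m+1)) (Set.Ico (0:ℝ) 1) := by
    apply strictMonoOn_of_deriv_pos (convex_Ico 0 1)
      (hcont _ fun x hx => ne_of_gt (hIco x hx))
    intro x hx
    rw [interior_Ico] at hx
    have hv : (1:ℝ) - x^(m+2) ≠ 0 := ne_of_gt (hIco x ⟨le_of_lt hx.1, hx.2⟩)
    rw [hderiv x hv]
    exact hF1pos x (le_of_lt hx.1) (ne_of_lt hx.2) hv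
  have mono2 : StrictMonoOn (joinProb (m+1)) (Set.Ioi (1:ℝ)) := by
    apply strictMonoOn_of_deriv_pos (convex_Ioi 1)
      (hcont _ fun x hx => ne_of_lt (hIoi x hx))
    intro x hx
    rw [interior_Ioi] at hx
    have hv : (1:ℝ) - x^(m+2) ≠ 0 := ne_of_lt (hIoi x hx)
    exact hderiv x hv ▸ hF1pos x (by linarith [Set.mem_Ioi.mp hx]) (ne_of_gt hx) hv
  have conc1 : StrictConcaveOn ℝ (Set.Ico (0:ℝ) 1) (joinProb (m+1)) := by
    apply strictConcaveOn_of_deriv2_neg (convex_Ico 0 1)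
      (hcont _ fun x hx => ne_of_gt (hIco x hx))
    intro x hx
    rw [interior_Ico] at hx
    have hv0 : 0 < 1 - x^(m+2) := hIco x ⟨le_of_lt hx.1, hx.2⟩
    show deriv (deriv (joinProb (m+1))) x < 0
    rw [hderiv2 x (ne_of_gt hv0)]
    apply div_neg_of_neg_of_pos
    · have h3 : (x-1)^3 < 0 := hodd3.pow_neg (by linarith [hx.2])
      have h1 : ((m:ℝ)+2)*(x-1)^3 < 0 := mul_neg_of_pos_of_neg (by positivity) h3
      have h2 : ((m:ℝ)+2)*(x-1)^3*x^m < 0 := mul_neg_of_neg_of_pos h1 (pow_pos hx.1 m)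
      exact mul_neg_of_neg_of_pos h2 (Taux_pos m (le_of_lt hx.1))
    · positivity
  have conc2 : StrictConcaveOn ℝ (Set.Ioi (1:ℝ)) (joinProb (m+1)) := by
    apply strictConcaveOn_of_deriv2_neg (convex_Ioi 1)
      (hcont _ fun x hx => ne_of_lt (hIoi x hx))
    intro x hx
    rw [interior_Ioi] at hx
    have hx1 : (1:ℝ) < x := hx
    have hv0 : 1 - x^(m+2) < 0 := hIoi x hx
    show deriv (deriv (joinProb (m+1))) x < 0
    rw [hderiv2 x (ne_of_lt hv0)]
    apply div_neg_of_pos_of_neg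
    · have h3 : (0:ℝ) < (x-1)^3 := pow_pos (by linarith) 3
      have := Taux_pos m (x := x) (by linarith)
      have := pow_pos (show (0:ℝ) < x by linarith) m
      positivity
    · exact hodd3.pow_neg hv0
  refine ⟨mono1, conc1, mono2, conc2, ?_⟩
  intro ρ hρ
  have hge : 0 ≤ ρ := by
    rcases hρ with h | h
    · exact h.1
    · linarith [Set.mem_Ioi.mp h]
  have hne : ρ ≠ 1 := by
    rcases hρ with h | h
    · exact ne_of_lt h.2
    · exact ne_of_gt h
  have hv : (1:ℝ) - ρ^(m+2) ≠ 0 := by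
    rcases hρ with h | h
    · exact ne_of_gt (hIco ρ h)
    · exact ne_of_lt (hIoi ρ h)
  have hEq : ((((m+1:ℕ)):ℝ) * ρ ^ (m+1+1) - ((((m+1:ℕ)):ℝ) + 1) * ρ ^ (m+1) + 1) / (1 - ρ ^ (m+1+1)) ^ 2
      = (((m:ℝ)+1)*ρ^(m+2) - ((m:ℝ)+2)*ρ^(m+1) + 1) / (1 - ρ^(m+2))^2 := by
    push_cast
    ring
  constructor
  · rw [hderiv ρ hv, ← hEq]
  · rw [hEq]
    exact hF1pos ρ hge hne hv
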